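/- Let X be a normed space, x₁,…,xₙ ∈ B_X, and ε > 0. If the set {x₁,…,xₙ} is ε-shattered by the dual unit ball B_{X*} (viewed as a class of functions on B_X), then for all real scalars a₁,…,aₙ one has ε·Σᵢ|aᵢ| ≤ ‖Σᵢ aᵢxᵢ‖. -/
import Mathlib


/-- The points `x 0, …, x (n-1)` are `ε`-shattered by the unit ball of the dual space:
there is a level function `h` such that for every subset `S` there is a functional of
norm at most one which is below `h - ε` on `S` and above `h + ε` off `S`. -/
def ShatteredByDualBall {X : Type*} [NormedAddCommGroup X] [NormedSpace ℝ X]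
    {n : ℕ} (x : Fin n → X) (ε : ℝ) : Prop :=
  ∃ h : Fin n → ℝ, ∀ S : Finset (Fin n), ∃ φ : X →L[ℝ] ℝ, ‖φ‖ ≤ 1 ∧
    ∀ i, (i ∈ S → φ (x i) ≤ h i - ε) ∧ (i ∉ S → h i + ε ≤ φ (x i))

theorem shattered_dominates_l1 {X : Type*} [NormedAddCommGroup X] [NormedSpace ℝ X]
    {n : ℕ} (x : Fin n → X) (hx : ∀ i, ‖x i‖ ≤ 1) (ε : ℝ) (hε : 0 < ε)
    (hsh : ShatteredByDualBall x ε) :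
    ∀ a : Fin n → ℝ, ε * ∑ i, |a i| ≤ ‖∑ i, a i • x i‖ := by
  obtain ⟨h, hh⟩ := hsh
  intro a
  set S : Finset (Fin n) := Finset.univ.filter (fun i => a i < 0) with hS
  obtain ⟨φ₁, hφ₁n, hφ₁⟩ := hh S
  obtain ⟨φ₂, hφ₂n, hφ₂⟩ := hh Sᶜ
  set ψ : X →L[ℝ] ℝ := φ₁ - φ₂ with hψ
  have hmem : ∀ i, i ∈ S ↔ a i < 0 := by
    intro i; simp [hS]
  have key : ∀ i, 2 * ε * |a i| ≤ a i * ψ (x i) := by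
    intro i
    have hψx : ψ (x i) = φ₁ (x i) - φ₂ (x i) := rfl
    rcases lt_or_ge (a i) 0 with hne | hpo
    · have hi : i ∈ S := (hmem i).2 hne
      have h1 : φ₁ (x i) ≤ h i - ε := (hφ₁ i).1 hi
      have h2 : h i + ε ≤ φ₂ (x i) := (hφ₂ i).2 (by simpa using hi)
      have hdiff : ψ (x i) ≤ -(2 * ε) := by rw [hψx]; linarith
      have : a i * ψ (x i) ≥ a i * (-(2 * ε)) :=
        mul_le_mul_of_nonpos_left hdiff hne.le
      rw [abs_of_neg hne]; nlinarith
    · have hi : i ∉ S := by simp [hmem i, not_lt.2 hpo]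
      have h1 : h i + ε ≤ φ₁ (x i) := (hφ₁ i).2 hi
      have h2 : φ₂ (x i) ≤ h i - ε := (hφ₂ i).1 (by simpa using hi)
      have hdiff : 2 * ε ≤ ψ (x i) := by rw [hψx]; linarith
      rw [abs_of_nonneg hpo]; nlinarith
  have hsum : 2 * ε * ∑ i, |a i| ≤ ψ (∑ i, a i • x i) := by
    rw [map_sum]
    rw [Finset.mul_sum]
    apply Finset.sum_le_sum
    intro i _
    simpa [mul_comm] using key i
  have hbound : ψ (∑ i, a i • x i) ≤ 2 * ‖∑ i, a i • x i‖ := by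
    calc ψ (∑ i, a i • x i) ≤ ‖ψ (∑ i, a i • x i)‖ := le_abs_self _
      _ ≤ ‖ψ‖ * ‖∑ i, a i • x i‖ := ψ.le_opNorm _
      _ ≤ 2 * ‖∑ i, a i • x i‖ := by
          apply mul_le_mul_of_nonneg_right _ (norm_nonneg _)
          calc ‖ψ‖ ≤ ‖φ₁‖ + ‖φ₂‖ := norm_sub_le _ _
            _ ≤ 2 := by linarith
  nlinarith [hε.le]
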